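/- For u, v in the open unit ball of ℝⁿ, the Lorentz boost applied to the four-velocity of v gives the four-velocity of u ⊕ v: B(u) · (γ_v, γ_v v)ᵀ = (γ_{u⊕v}, γ_{u⊕v} (u⊕v))ᵀ. -/

import Mathlib

open scoped RealInnerProductSpace

noncomputable def gam {n : ℕ} (v : EuclideanSpace ℝ (Fin n)) : ℝ :=
  1 / Real.sqrt (1 - ‖v‖ ^ 2)

noncomputable def eAdd {n : ℕ} (u v : EuclideanSpace ℝ (Fin n)) :
    EuclideanSpace ℝ (Fin n) :=
  (1 / (1 + ⟪u, v⟫)) •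
    (u + (1 / gam u) • v + ((gam u / (1 + gam u)) * ⟪u, v⟫) • u)

noncomputable def boost {n : ℕ} (v : EuclideanSpace ℝ (Fin n)) :
    Matrix (Unit ⊕ Fin n) (Unit ⊕ Fin n) ℝ :=
  Matrix.fromBlocks
    (Matrix.of fun _ _ => gam v)
    (Matrix.of fun _ j => gam v * v j)
    (Matrix.of fun i _ => gam v * v i)
    (1 + Matrix.of fun i j => (gam v) ^ 2 / (1 + gam v) * v i * v j)

lemma gam_pos' {n : ℕ} (v : EuclideanSpace ℝ (Fin n)) (hv : ‖v‖ < 1) : 0 < gam v := by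
  have h : (0:ℝ) < 1 - ‖v‖ ^ 2 := by nlinarith [norm_nonneg v]
  simp only [gam]
  positivity

lemma gam_sq' {n : ℕ} (v : EuclideanSpace ℝ (Fin n)) (hv : ‖v‖ < 1) :
    ‖v‖ ^ 2 = 1 - 1 / (gam v) ^ 2 := by
  have h : (0:ℝ) < 1 - ‖v‖ ^ 2 := by nlinarith [norm_nonneg v]
  have h2 : (gam v) ^ 2 = 1 / (1 - ‖v‖ ^ 2) := by
    rw [gam, div_pow, one_pow, Real.sq_sqrt h.le]
  rw [h2]
  field_simp
  ring

lemma inner_pos' {n : ℕ} (u v : EuclideanSpace ℝ (Fin n)) (hu : ‖u‖ < 1)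
    (hv : ‖v‖ < 1) : (0:ℝ) < 1 + ⟪u, v⟫ := by
  have h1 := abs_real_inner_le_norm u v
  have h2 : |⟪u, v⟫| < 1 :=
    lt_of_le_of_lt h1 (by nlinarith [norm_nonneg u, norm_nonneg v])
  have := abs_lt.mp h2
  linarith [this.1]

set_option maxHeartbeats 1000000 in
lemma key' {n : ℕ} (u v : EuclideanSpace ℝ (Fin n)) (hu : ‖u‖ < 1) (hv : ‖v‖ < 1) :
    1 - ‖eAdd u v‖ ^ 2 = 1 / (gam u * gam v * (1 + ⟪u, v⟫)) ^ 2 := by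
  have hg := gam_pos' u hu
  have hh := gam_pos' v hv
  have h1g : (0:ℝ) < 1 + gam u := by linarith
  have h1a := inner_pos' u v hu hv
  have hgu := gam_sq' u hu
  have hgv := gam_sq' v hv
  have hg' : gam u ≠ 0 := ne_of_gt hg
  have hk' : gam v ≠ 0 := ne_of_gt hh
  have h1g' : 1 + gam u ≠ 0 := ne_of_gt h1g
  have h1a' : 1 + ⟪u, v⟫ ≠ 0 := ne_of_gt h1a
  rw [← real_inner_self_eq_norm_sq]
  simp only [eAdd, inner_add_left, inner_add_right, real_inner_smul_left,
    real_inner_smul_right]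
  rw [real_inner_self_eq_norm_sq u, real_inner_self_eq_norm_sq v, hgu, hgv]
  obtain ⟨a, ha⟩ : ∃ a : ℝ, ⟪u, v⟫ = a := ⟨_, rfl⟩
  have hvu : ⟪v, u⟫ = a := by rw [real_inner_comm]; exact ha
  obtain ⟨g, hgd⟩ : ∃ g : ℝ, gam u = g := ⟨_, rfl⟩
  obtain ⟨k, hkd⟩ : ∃ k : ℝ, gam v = k := ⟨_, rfl⟩
  simp only [ha, hvu, hgd, hkd] at h1a' hg' hk' h1g' ⊢
  field_simp
  ring

lemma gam_eAdd' {n : ℕ} (u v : EuclideanSpace ℝ (Fin n)) (hu : ‖u‖ < 1)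
    (hv : ‖v‖ < 1) : gam (eAdd u v) = gam u * gam v * (1 + ⟪u, v⟫) := by
  have hg := gam_pos' u hu
  have hh := gam_pos' v hv
  have h1a := inner_pos' u v hu hv
  have hX : (0:ℝ) < gam u * gam v * (1 + ⟪u, v⟫) := by positivity
  rw [gam, key' u v hu hv, one_div ((gam u * gam v * (1 + ⟪u, v⟫)) ^ 2),
    Real.sqrt_inv, Real.sqrt_sq hX.le, one_div, inv_inv]

theorem boost_mulVec_fourVelocity {n : ℕ} (u v : EuclideanSpace ℝ (Fin n))
    (hu : ‖u‖ < 1) (hv : ‖v‖ < 1) :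
    (boost u).mulVec (Sum.elim (fun _ => gam v) (fun i => gam v * v i)) =
      Sum.elim (fun _ => gam (eAdd u v)) (fun i => gam (eAdd u v) * (eAdd u v) i) := by
  have hg := gam_pos' u hu
  have hh := gam_pos' v hv
  have h1g : (0:ℝ) < 1 + gam u := by linarith
  have h1a := inner_pos' u v hu hv
  have hg' : gam u ≠ 0 := ne_of_gt hg
  have h1g' : 1 + gam u ≠ 0 := ne_of_gt h1g
  have h1a' : 1 + ⟪u, v⟫ ≠ 0 := ne_of_gt h1a
  have hinner : ⟪u, v⟫ = ∑ j, u j * v j := by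
    simp [PiLp.inner_apply, RCLike.inner_apply]
    exact Finset.sum_congr rfl fun j _ => mul_comm _ _
  funext i
  rcases i with i | i
  · simp only [boost, Matrix.mulVec, dotProduct, Fintype.sum_sum_type,
      Matrix.fromBlocks_apply₁₁, Matrix.fromBlocks_apply₁₂, Matrix.of_apply,
      Sum.elim_inl, Sum.elim_inr, gam_eAdd' u v hu hv, hinner,
      Finset.univ_unique, Finset.sum_singleton]
    rw [mul_add, mul_one, Finset.mul_sum]
    congr 1
    exact Finset.sum_congr rfl fun j _ => by ring
  · simp only [boost, Matrix.mulVec, dotProduct, Fintype.sum_sum_type,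
      Matrix.fromBlocks_apply₂₁, Matrix.fromBlocks_apply₂₂, Matrix.of_apply,
      Sum.elim_inl, Sum.elim_inr, Matrix.add_apply, Matrix.one_apply,
      Finset.univ_unique, Finset.sum_singleton, gam_eAdd' u v hu hv]
    have heAdd : (eAdd u v) i = (1 / (1 + ⟪u, v⟫)) *
        (u i + (1 / gam u) * v i + ((gam u / (1 + gam u)) * ⟪u, v⟫) * u i) := by
      simp [eAdd, PiLp.smul_apply, PiLp.add_apply, smul_eq_mul]
      ring
    have hsum : ∑ j, ((if i = j then (1:ℝ) else 0) +
          (gam u) ^ 2 / (1 + gam u) * u i * u j) * (gam v * v j)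
        = gam v * v i + (gam u) ^ 2 / (1 + gam u) * u i * gam v * ⟪u, v⟫ := by
      have hterm : ∀ j, ((if i = j then (1:ℝ) else 0) +
            (gam u) ^ 2 / (1 + gam u) * u i * u j) * (gam v * v j)
          = (if i = j then gam v * v j else 0) +
            ((gam u) ^ 2 / (1 + gam u) * u i * gam v) * (u j * v j) := by
        intro j
        by_cases h : i = j <;> simp [h] <;> ring
      rw [Finset.sum_congr rfl (fun j _ => hterm j), Finset.sum_add_distrib,
        Finset.sum_ite_eq, ← Finset.mul_sum, ← hinner]
      simp
    rw [hsum, heAdd]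
    obtain ⟨a, ha⟩ : ∃ a : ℝ, ⟪u, v⟫ = a := ⟨_, rfl⟩
    rw [ha] at h1a' ⊢
    field_simp
    ring
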